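/- arXiv:0802.3761 — 2 statements merged into one kernel-verified Lean document; each statement's English description precedes it below -/
import Mathlib

section
/- Let l_0, l ∈ ℕ with l ≥ l_0, and write l = n l_0 + m with n ∈ ℕ and m ∈ {0, …, l_0 − 1}. Then for every k ∈ ℕ, e_k(N(0,I_l))² ≤ n · e_{[k^{l_0/l}]}(N(0,I_{l_0}))² + m · e_{[k^{1/l}]}(N(0,1))², where [x] denotes the integer part of x. -/
open MeasureTheory ProbabilityTheory Real Filter

noncomputable section

/-- Minimal `n`-th `L²` quantization error of a probability measure `μ` on a normed space. -/
def quantErrMeas {E : Type*} [NormedAddCommGroup E] [MeasurableSpace E]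
    (μ : Measure E) (n : ℕ) : ℝ :=
  sInf { r : ℝ | ∃ α : Finset E, α.Nonempty ∧ α.card ≤ n ∧
    r = (∫ x, (⨅ a : α, ‖x - (a : E)‖ ^ 2) ∂μ) ^ (1/2 : ℝ) }

/-- The standard Gaussian distribution `N(0, I_l)` on `ℝ^l` with the Euclidean norm. -/
def stdGaussian (l : ℕ) : Measure (EuclideanSpace ℝ (Fin l)) :=
  (Measure.pi fun _ : Fin l => gaussianReal 0 1).map (EuclideanSpace.equiv (Fin l) ℝ).symm



abbrev Esp (r : ℕ) := EuclideanSpace ℝ (Fin r)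

def stdPi (l : ℕ) : Measure (Fin l → ℝ) := Measure.pi fun _ : Fin l => gaussianReal 0 1

instance (l : ℕ) : IsProbabilityMeasure (stdPi l) := by unfold stdPi; infer_instance

lemma stdPi_map_comp {r l : ℕ} {e : Fin r → Fin l} (he : Function.Injective e) :
    MeasurePreserving (fun x : Fin l → ℝ => x ∘ e) (stdPi l) (stdPi r) := by
  classical
  have hmeas : Measurable (fun x : Fin l → ℝ => x ∘ e) :=
    measurable_pi_lambda _ fun i => measurable_pi_apply (e i)
  refine ⟨hmeas, ?_⟩
  refine (Measure.pi_eq fun s hs => ?_).symm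
  rw [Measure.map_apply hmeas (MeasurableSet.univ_pi hs)]
  have hpre : (fun x : Fin l → ℝ => x ∘ e) ⁻¹' (Set.univ.pi s)
      = Set.univ.pi (Function.extend e s fun _ => Set.univ) := by
    ext x
    simp only [Set.mem_preimage, Set.mem_pi, Set.mem_univ, true_implies, Function.comp]
    constructor
    · intro h j
      rcases em (∃ i, e i = j) with ⟨i, rfl⟩ | hj
      · rw [he.extend_apply]; exact h i
      · rw [Function.extend_apply' _ _ _ hj]; trivial
    · intro h i
      have := h (e i)
      rwa [he.extend_apply] at this
  rw [hpre, stdPi, Measure.pi_pi]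
  have h1 : ∀ j : Fin l, j ∉ Finset.univ.image e →
      gaussianReal 0 1 (Function.extend e s (fun _ => Set.univ) j) = 1 := by
    intro j hj
    have hj' : ¬∃ i, e i = j := by
      simpa [Finset.mem_image] using hj
    rw [Function.extend_apply' _ _ _ hj']
    simp
  calc ∏ j : Fin l, gaussianReal 0 1 (Function.extend e s (fun _ => Set.univ) j)
      = ∏ j ∈ Finset.univ.image e,
          gaussianReal 0 1 (Function.extend e s (fun _ => Set.univ) j) :=
        (Finset.prod_subset (Finset.subset_univ _) (fun j _ hj => h1 j hj)).symm
    _ = ∏ i : Fin r, gaussianReal 0 1 (Function.extend e s (fun _ => Set.univ) (e i)) :=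
        Finset.prod_image (fun a _ b _ h => he h)
    _ = ∏ i : Fin r, gaussianReal 0 1 (s i) := by
        refine Finset.prod_congr rfl fun i _ => ?_
        rw [he.extend_apply]

lemma stdPi_eval {l : ℕ} (i : Fin l) :
    MeasurePreserving (fun x : Fin l → ℝ => x i) (stdPi l) (gaussianReal 0 1) := by
  have h1 := stdPi_map_comp (l := l) (e := fun _ : Fin 1 => i)
    (fun a b _ => Subsingleton.elim a b)
  have h2 := measurePreserving_funUnique (gaussianReal 0 1) (Fin 1)
  exact h2.comp h1

lemma integrable_sq_gaussian : Integrable (fun x : ℝ => x ^ 2) (gaussianReal 0 1) := by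
  rw [gaussianReal_of_var_ne_zero 0 one_ne_zero]
  rw [integrable_withDensity_iff (measurable_gaussianPDF 0 1)
    (Filter.Eventually.of_forall fun x => ENNReal.ofReal_lt_top)]
  have h : ∀ x : ℝ, x ^ 2 * (gaussianPDF 0 1 x).toReal
      = (Real.sqrt (2 * π))⁻¹ * (x ^ ((2:ℕ):ℝ) * Real.exp (-(1/2) * x ^ 2)) := by
    intro x
    rw [gaussianPDF, ENNReal.toReal_ofReal (gaussianPDFReal_nonneg 0 1 x), gaussianPDFReal]
    rw [Real.rpow_natCast]
    push_cast
    ring_nf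
  simp only [h]
  exact (integrable_rpow_mul_exp_neg_mul_sq (by norm_num : (0:ℝ) < 1/2)
    (by norm_num : (-1:ℝ) < ((2:ℕ):ℝ))).const_mul _

lemma integrable_sq_sub_gaussian (c : ℝ) :
    Integrable (fun x : ℝ => (x - c) ^ 2) (gaussianReal 0 1) := by
  have hg : Integrable (fun x : ℝ => 2 * x ^ 2 + 2 * c ^ 2) (gaussianReal 0 1) :=
    (integrable_sq_gaussian.const_mul 2).add (integrable_const _)
  refine hg.mono' ?_ ?_
  · exact (Continuous.aestronglyMeasurable (by continuity))
  · refine Filter.Eventually.of_forall fun x => ?_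
    rw [Real.norm_eq_abs, abs_of_nonneg (by positivity)]
    nlinarith [sq_nonneg (x + c)]


def qf {E : Type*} [NormedAddCommGroup E] (β : Finset E) (y : E) : ℝ :=
  ⨅ b : β, ‖y - (b : E)‖ ^ 2

lemma qf_eq_inf' {E : Type*} [NormedAddCommGroup E] {β : Finset E} (hβ : β.Nonempty) (y : E) :
    qf β y = β.inf' hβ fun b => ‖y - b‖ ^ 2 := by
  rw [Finset.inf'_eq_csInf_image, qf, iInf]
  congr 1
  ext r
  simp [Set.range, Set.mem_image]

lemma qf_nonneg {E : Type*} [NormedAddCommGroup E] {β : Finset E} (hβ : β.Nonempty) (y : E) :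
    0 ≤ qf β y := by
  rw [qf_eq_inf' hβ]
  exact Finset.le_inf' hβ _ fun b _ => by positivity

lemma qf_le {E : Type*} [NormedAddCommGroup E] {β : Finset E} (hβ : β.Nonempty) {b : E}
    (hb : b ∈ β) (y : E) : qf β y ≤ ‖y - b‖ ^ 2 := by
  rw [qf_eq_inf' hβ]
  exact Finset.inf'_le _ hb

lemma qf_continuous {E : Type*} [NormedAddCommGroup E] {β : Finset E} (hβ : β.Nonempty) :
    Continuous (qf β) := by
  have : qf β = fun y => β.inf' hβ fun b => ‖y - b‖ ^ 2 := funext fun y => qf_eq_inf' hβ y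
  rw [this]
  exact Continuous.finset_inf'_apply hβ fun b _ => by continuity

-- measure-preserving projections
lemma mp_toEu (r : ℕ) :
    MeasurePreserving (⇑(EuclideanSpace.equiv (Fin r) ℝ).symm) (stdPi r) (stdGaussian r) :=
  ⟨(EuclideanSpace.equiv (Fin r) ℝ).symm.continuous.measurable, rfl⟩

lemma mp_proj {r l : ℕ} {e : Fin r → Fin l} (he : Function.Injective e) :
    MeasurePreserving (fun x : Esp l => (EuclideanSpace.equiv (Fin r) ℝ).symm (fun i => x (e i)))
      (stdGaussian l) (stdGaussian r) := by
  have hmeq : MeasurePreserving (MeasurableEquiv.toLp 2 (Fin l → ℝ))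
      (stdPi l) (stdGaussian l) := ⟨(MeasurableEquiv.toLp 2 (Fin l → ℝ)).measurable, rfl⟩
  have h1 : MeasurePreserving (fun x : Fin l → ℝ =>
      (EuclideanSpace.equiv (Fin r) ℝ).symm (x ∘ e)) (stdPi l) (stdGaussian r) := by
    have := stdPi_map_comp he
    exact (mp_toEu r).comp this
  have h2 : MeasurePreserving (MeasurableEquiv.toLp 2 (Fin l → ℝ)).symm
      (stdGaussian l) (stdPi l) := hmeq.symm (MeasurableEquiv.toLp 2 (Fin l → ℝ))
  exact h1.comp h2
lemma integrable_norm_sq_sub (r : ℕ) (b : Esp r) :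
    Integrable (fun y : Esp r => ‖y - b‖ ^ 2) (stdGaussian r) := by
  rw [_root_.stdGaussian]
  rw [integrable_map_measure (Continuous.aestronglyMeasurable (by continuity))
    (EuclideanSpace.equiv (Fin r) ℝ).symm.continuous.measurable.aemeasurable]
  have h : ((fun y : Esp r => ‖y - b‖ ^ 2) ∘ ⇑(EuclideanSpace.equiv (Fin r) ℝ).symm)
      = fun x : Fin r → ℝ => ∑ i, (x i - b i) ^ 2 := by
    funext x
    simp only [Function.comp]
    rw [EuclideanSpace.norm_eq, Real.sq_sqrt (by positivity)]
    refine Finset.sum_congr rfl fun i _ => ?_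
    have h2 : ((EuclideanSpace.equiv (Fin r) ℝ).symm x - b) i = x i - b i := rfl
    rw [h2, Real.norm_eq_abs, sq_abs]
  rw [h]
  refine integrable_finset_sum _ fun i _ => ?_
  exact ((stdPi_eval i).integrable_comp
    (Continuous.aestronglyMeasurable (by continuity))).mpr (integrable_sq_sub_gaussian (b i))

lemma integrable_qf {r : ℕ} {β : Finset (Esp r)} (hβ : β.Nonempty) :
    Integrable (qf β) (stdGaussian r) := by
  obtain ⟨b₀, hb₀⟩ := id hβ
  refine (integrable_norm_sq_sub r b₀).mono' ((qf_continuous hβ).aestronglyMeasurable) ?_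
  refine Filter.Eventually.of_forall fun y => ?_
  rw [Real.norm_eq_abs, abs_of_nonneg (qf_nonneg hβ y)]
  exact qf_le hβ hb₀ y

lemma integral_qf_nonneg {r : ℕ} {β : Finset (Esp r)} (hβ : β.Nonempty)
    (μ : Measure (Esp r)) : 0 ≤ ∫ y, qf β y ∂μ :=
  integral_nonneg fun y => qf_nonneg hβ y

lemma integral_qf_proj {r l : ℕ} {e : Fin r → Fin l} (he : Function.Injective e)
    {β : Finset (Esp r)} (hβ : β.Nonempty) :
    ∫ x, qf β ((EuclideanSpace.equiv (Fin r) ℝ).symm (fun i => x (e i))) ∂(stdGaussian l)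
      = ∫ y, qf β y ∂(stdGaussian r) := by
  rw [← (mp_proj he).map_eq,
    integral_map (mp_proj he).measurable.aemeasurable
      ((qf_continuous hβ).aestronglyMeasurable)]

section QuantErr

variable {E : Type*} [NormedAddCommGroup E] [MeasurableSpace E] {μ : Measure E} {N : ℕ}

lemma quantSet_nonneg : ∀ r ∈ { r : ℝ | ∃ α : Finset E, α.Nonempty ∧ α.card ≤ N ∧
    r = (∫ x, (⨅ a : α, ‖x - (a : E)‖ ^ 2) ∂μ) ^ (1/2 : ℝ) }, 0 ≤ r := by
  rintro r ⟨α, hα, -, rfl⟩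
  exact Real.rpow_nonneg (integral_nonneg fun x => qf_nonneg hα x) _

lemma quantErrMeas_nonneg : 0 ≤ quantErrMeas μ N :=
  Real.sInf_nonneg quantSet_nonneg

lemma quantErrMeas_sq_le {β : Finset E} (hβ : β.Nonempty) (hcard : β.card ≤ N) :
    quantErrMeas μ N ^ 2 ≤ ∫ x, qf β x ∂μ := by
  have hI : 0 ≤ ∫ x, qf β x ∂μ := integral_nonneg fun x => qf_nonneg hβ x
  have hmem : (∫ x, qf β x ∂μ) ^ (1/2 : ℝ) ∈ { r : ℝ | ∃ α : Finset E, α.Nonempty ∧ α.card ≤ N ∧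
      r = (∫ x, (⨅ a : α, ‖x - (a : E)‖ ^ 2) ∂μ) ^ (1/2 : ℝ) } := ⟨β, hβ, hcard, rfl⟩
  have hle : quantErrMeas μ N ≤ (∫ x, qf β x ∂μ) ^ (1/2 : ℝ) :=
    csInf_le ⟨0, fun r hr => quantSet_nonneg r hr⟩ hmem
  calc quantErrMeas μ N ^ 2 ≤ ((∫ x, qf β x ∂μ) ^ (1/2 : ℝ)) ^ 2 :=
        pow_le_pow_left₀ quantErrMeas_nonneg hle 2
    _ = ∫ x, qf β x ∂μ := by
        rw [← Real.rpow_natCast ((∫ x, qf β x ∂μ) ^ (1/2 : ℝ)) 2, ← Real.rpow_mul hI]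
        norm_num

lemma quantErrMeas_exists_approx [Nonempty E] (hN : 1 ≤ N) {δ : ℝ} (hδ : 0 < δ) :
    ∃ β : Finset E, β.Nonempty ∧ β.card ≤ N ∧
      ∫ x, qf β x ∂μ ≤ quantErrMeas μ N ^ 2 + δ := by
  classical
  set S := { r : ℝ | ∃ α : Finset E, α.Nonempty ∧ α.card ≤ N ∧
      r = (∫ x, (⨅ a : α, ‖x - (a : E)‖ ^ 2) ∂μ) ^ (1/2 : ℝ) } with hS
  set q := quantErrMeas μ N with hq
  have hq0 : 0 ≤ q := quantErrMeas_nonneg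
  have hSne : S.Nonempty := by
    refine ⟨(∫ x, (⨅ a : ({Classical.arbitrary E} : Finset E),
      ‖x - (a : E)‖ ^ 2) ∂μ) ^ (1/2 : ℝ), ?_⟩
    exact ⟨{Classical.arbitrary E}, Finset.singleton_nonempty _, by simpa using hN, rfl⟩
  set δ' : ℝ := min 1 (δ / (2 * q + 2)) with hδ'
  have hδ'pos : 0 < δ' := lt_min one_pos (by positivity)
  obtain ⟨r, hrS, hrlt⟩ := Real.lt_sInf_add_pos hSne hδ'pos
  obtain ⟨β, hβ, hcard, hr⟩ := hrS
  have hI : 0 ≤ ∫ x, qf β x ∂μ := integral_nonneg fun x => qf_nonneg hβ x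
  have hI0 : 0 ≤ ∫ x, (⨅ a : ↑β, ‖x - (a : E)‖ ^ 2) ∂μ := hI
  have hr0 : 0 ≤ r := hr ▸ Real.rpow_nonneg hI0 _
  have hIr0 : (∫ x, (⨅ a : ↑β, ‖x - (a : E)‖ ^ 2) ∂μ) = r ^ 2 := by
    rw [hr, ← Real.rpow_natCast ((∫ x, (⨅ a : ↑β, ‖x - (a : E)‖ ^ 2) ∂μ)  ^ (1/2 : ℝ)) 2,
      ← Real.rpow_mul hI0]
    norm_num
  have hIr : ∫ x, qf β x ∂μ = r ^ 2 := hIr0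
  refine ⟨β, hβ, hcard, ?_⟩
  have hrq : r < q + δ' := hrlt
  have h1 : r ^ 2 < (q + δ') ^ 2 := by nlinarith
  have h2 : (q + δ') ^ 2 ≤ q ^ 2 + δ := by
    have ha : δ' ≤ 1 := min_le_left _ _
    have hb : δ' ≤ δ / (2 * q + 2) := min_le_right _ _
    have hc : (2 * q + 2) * δ' ≤ δ := by
      rw [← le_div_iff₀' (by positivity)]; exact hb
    nlinarith
  rw [hIr]
  calc r ^ 2 ≤ (q + δ') ^ 2 := le_of_lt h1
    _ ≤ q ^ 2 + δ := h2

end QuantErr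
def projE {r l : ℕ} (e : Fin r → Fin l) (x : Esp l) : Esp r :=
  (EuclideanSpace.equiv (Fin r) ℝ).symm (fun i => x (e i))

lemma mp_projE {r l : ℕ} {e : Fin r → Fin l} (he : Function.Injective e) :
    MeasurePreserving (projE e) (stdGaussian l) (stdGaussian r) := mp_proj he

lemma integral_qf_projE {r l : ℕ} {e : Fin r → Fin l} (he : Function.Injective e)
    {β : Finset (Esp r)} (hβ : β.Nonempty) :
    ∫ x, qf β (projE e x) ∂(stdGaussian l) = ∫ y, qf β y ∂(stdGaussian r) := by
  rw [← (mp_projE he).map_eq,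
    integral_map (mp_projE he).measurable.aemeasurable ((qf_continuous hβ).aestronglyMeasurable)]

lemma integrable_qf_projE {r l : ℕ} {e : Fin r → Fin l} (he : Function.Injective e)
    {β : Finset (Esp r)} (hβ : β.Nonempty) :
    Integrable (fun x => qf β (projE e x)) (stdGaussian l) :=
  ((mp_projE he).integrable_comp (qf_continuous hβ).aestronglyMeasurable).mpr (integrable_qf hβ)

lemma core_construction (l₀ n m l : ℕ) (hdecomp : l = n * l₀ + m)
    (β : Finset (Esp l₀)) (hβ : β.Nonempty) (γ : Finset (Esp 1)) (hγ : γ.Nonempty) :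
    ∃ α : Finset (Esp l), α.Nonempty ∧ α.card ≤ β.card ^ n * γ.card ^ m ∧
      ∫ x, qf α x ∂(stdGaussian l)
        ≤ n * ∫ y, qf β y ∂(stdGaussian l₀) + m * ∫ z, qf γ z ∂(stdGaussian 1) := by
  classical
  have hβ' : Nonempty β := hβ.to_subtype
  have hγ' : Nonempty γ := hγ.to_subtype
  let σ : (Fin n × Fin l₀) ⊕ Fin m ≃ Fin l :=
    (Equiv.sumCongr finProdFinEquiv (Equiv.refl (Fin m))).trans
      ((finSumFinEquiv).trans (finCongr hdecomp.symm))
  let eB : Fin n → Fin l₀ → Fin l := fun j i => σ (Sum.inl (j, i))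
  let eS : Fin m → Fin l := fun t => σ (Sum.inr t)
  have heBinj : ∀ j, Function.Injective (eB j) := by
    intro j i i' h
    have := σ.injective h
    simpa using this
  have heSinj : ∀ t, Function.Injective (fun _ : Fin 1 => eS t) :=
    fun t a b _ => Subsingleton.elim a b
  let Φ : (Fin n → β) × (Fin m → γ) → Esp l := fun bg =>
    (EuclideanSpace.equiv (Fin l) ℝ).symm (fun p =>
      Sum.elim (fun q : Fin n × Fin l₀ => ((bg.1 q.1 : Esp l₀) q.2))
        (fun t => ((bg.2 t : Esp 1) 0)) (σ.symm p))
  let α : Finset (Esp l) := Finset.image Φ Finset.univ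
  have hαne : α.Nonempty :=
    ⟨Φ (Classical.arbitrary _), Finset.mem_image_of_mem Φ (Finset.mem_univ _)⟩
  have hcard : α.card ≤ β.card ^ n * γ.card ^ m := by
    calc α.card ≤ (Finset.univ : Finset ((Fin n → β) × (Fin m → γ))).card :=
          Finset.card_image_le
      _ = Fintype.card ((Fin n → β) × (Fin m → γ)) := Finset.card_univ
      _ = β.card ^ n * γ.card ^ m := by
          rw [Fintype.card_prod, Fintype.card_fun, Fintype.card_fun]
          simp [Fintype.card_coe]
  have hΦB : ∀ bg (j : Fin n) (i : Fin l₀), Φ bg (eB j i) = (bg.1 j : Esp l₀) i := by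
    intro bg j i
    show Sum.elim _ _ (σ.symm (σ (Sum.inl (j, i)))) = _
    rw [Equiv.symm_apply_apply]
    rfl
  have hΦS : ∀ bg (t : Fin m), Φ bg (eS t) = (bg.2 t : Esp 1) 0 := by
    intro bg t
    show Sum.elim _ _ (σ.symm (σ (Sum.inr t))) = _
    rw [Equiv.symm_apply_apply]
    rfl
  have hpoint : ∀ x : Esp l, qf α x ≤
      ∑ j : Fin n, qf β (projE (eB j) x)
        + ∑ t : Fin m, qf γ (projE (fun _ : Fin 1 => eS t) x) := by
    intro x
    have hchoiceB : ∀ j : Fin n, ∃ b ∈ β,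
        (β.inf' hβ fun b => ‖projE (eB j) x - b‖ ^ 2) = ‖projE (eB j) x - b‖ ^ 2 :=
      fun j => Finset.exists_mem_eq_inf' hβ _
    choose bb hbbmem hbbeq using hchoiceB
    have hchoiceS : ∀ t : Fin m, ∃ g ∈ γ,
        (γ.inf' hγ fun g => ‖projE (fun _ : Fin 1 => eS t) x - g‖ ^ 2)
          = ‖projE (fun _ : Fin 1 => eS t) x - g‖ ^ 2 :=
      fun t => Finset.exists_mem_eq_inf' hγ _
    choose gg hggmem hggeq using hchoiceS
    set a : Esp l := Φ (fun j => ⟨bb j, hbbmem j⟩, fun t => ⟨gg t, hggmem t⟩) with ha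
    have h1 : qf α x ≤ ‖x - a‖ ^ 2 :=
      qf_le hαne (Finset.mem_image_of_mem Φ (Finset.mem_univ _)) x
    have hcoordB : ∀ (j : Fin n) (i : Fin l₀),
        ‖(x - a) (eB j i)‖ ^ 2 = ‖(projE (eB j) x - bb j) i‖ ^ 2 := by
      intro j i
      rw [PiLp.sub_apply, PiLp.sub_apply, ha, hΦB]
      rfl
    have hcoordS : ∀ (t : Fin m),
        ‖(x - a) (eS t)‖ ^ 2 = ‖projE (fun _ : Fin 1 => eS t) x - gg t‖ ^ 2 := by
      intro t
      rw [EuclideanSpace.norm_eq, Real.sq_sqrt (by positivity), Fin.sum_univ_one,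
        PiLp.sub_apply, PiLp.sub_apply, ha, hΦS]
      rfl
    have h2 : ‖x - a‖ ^ 2 = ∑ j : Fin n, ‖projE (eB j) x - bb j‖ ^ 2
        + ∑ t : Fin m, ‖projE (fun _ : Fin 1 => eS t) x - gg t‖ ^ 2 := by
      rw [EuclideanSpace.norm_eq, Real.sq_sqrt (by positivity)]
      have hre : ∑ p : Fin l, ‖(x - a) p‖ ^ 2
          = ∑ q : (Fin n × Fin l₀) ⊕ Fin m, ‖(x - a) (σ q)‖ ^ 2 :=
        (Equiv.sum_comp σ (fun p => ‖(x - a) p‖ ^ 2)).symm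
      rw [hre, Fintype.sum_sum_type, Fintype.sum_prod_type]
      congr 1
      · refine Finset.sum_congr rfl fun j _ => ?_
        rw [EuclideanSpace.norm_eq, Real.sq_sqrt (by positivity)]
        exact Finset.sum_congr rfl fun i _ => hcoordB j i
      · exact Finset.sum_congr rfl fun t _ => hcoordS t
    calc qf α x ≤ ‖x - a‖ ^ 2 := h1
      _ = ∑ j : Fin n, ‖projE (eB j) x - bb j‖ ^ 2
            + ∑ t : Fin m, ‖projE (fun _ : Fin 1 => eS t) x - gg t‖ ^ 2 := h2
      _ = ∑ j : Fin n, qf β (projE (eB j) x)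
            + ∑ t : Fin m, qf γ (projE (fun _ : Fin 1 => eS t) x) := by
          congr 1
          · refine Finset.sum_congr rfl fun j _ => ?_
            rw [qf_eq_inf' hβ, hbbeq]
          · refine Finset.sum_congr rfl fun t _ => ?_
            rw [qf_eq_inf' hγ, hggeq]
  refine ⟨α, hαne, hcard, ?_⟩
  have hintB : ∀ j : Fin n, Integrable (fun x => qf β (projE (eB j) x)) (stdGaussian l) :=
    fun j => integrable_qf_projE (heBinj j) hβ
  have hintS : ∀ t : Fin m,
      Integrable (fun x => qf γ (projE (fun _ : Fin 1 => eS t) x)) (stdGaussian l) :=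
    fun t => integrable_qf_projE (heSinj t) hγ
  calc ∫ x, qf α x ∂(stdGaussian l)
      ≤ ∫ x, (∑ j : Fin n, qf β (projE (eB j) x)
          + ∑ t : Fin m, qf γ (projE (fun _ : Fin 1 => eS t) x)) ∂(stdGaussian l) := by
        refine integral_mono_of_nonneg
          (Filter.Eventually.of_forall fun x => qf_nonneg hαne x) ?_
          (Filter.Eventually.of_forall hpoint)
        exact (integrable_finset_sum _ fun j _ => hintB j).add
          (integrable_finset_sum _ fun t _ => hintS t)
    _ = ∑ j : Fin n, ∫ x, qf β (projE (eB j) x) ∂(stdGaussian l)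
          + ∑ t : Fin m, ∫ x, qf γ (projE (fun _ : Fin 1 => eS t) x) ∂(stdGaussian l) := by
        rw [integral_add (integrable_finset_sum _ fun j _ => hintB j)
          (integrable_finset_sum _ fun t _ => hintS t),
          integral_finset_sum _ fun j _ => hintB j,
          integral_finset_sum _ fun t _ => hintS t]
    _ = n * ∫ y, qf β y ∂(stdGaussian l₀) + m * ∫ z, qf γ z ∂(stdGaussian 1) := by
        rw [Finset.sum_congr rfl fun (j : Fin n) _ => integral_qf_projE (heBinj j) hβ,
          Finset.sum_congr rfl fun (t : Fin m) _ => integral_qf_projE (heSinj t) hγ]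
        simp [Finset.sum_const, nsmul_eq_mul]

/-- Writing `l = n l₀ + m` with `0 ≤ m < l₀`, the block-quantizer construction yields
`e_k(N(0,I_l))² ≤ n e_{⌊k^{l₀/l}⌋}(N(0,I_{l₀}))² + m e_{⌊k^{1/l}⌋}(N(0,1))²`. -/
theorem gaussian_quantization_block_inequality
    (l₀ l n m k : ℕ) (hl₀ : 1 ≤ l₀) (hl : l₀ ≤ l)
    (hdecomp : l = n * l₀ + m) (hm : m < l₀) (hk : 1 ≤ k) :
    (quantErrMeas (stdGaussian l) k) ^ 2
      ≤ n * (quantErrMeas (stdGaussian l₀) ⌊(k : ℝ) ^ ((l₀ : ℝ) / l)⌋₊) ^ 2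
        + m * (quantErrMeas (stdGaussian 1) ⌊(k : ℝ) ^ (1 / (l : ℝ))⌋₊) ^ 2 := by
  set k₁ := ⌊(k : ℝ) ^ ((l₀ : ℝ) / l)⌋₊ with hk₁def
  set k₂ := ⌊(k : ℝ) ^ (1 / (l : ℝ))⌋₊ with hk₂def
  have hl1 : 1 ≤ l := le_trans hl₀ hl
  have hlR : (0:ℝ) < l := by exact_mod_cast hl1
  have hkR : (1:ℝ) ≤ k := by exact_mod_cast hk
  have hkpos : (0:ℝ) < k := by linarith
  have hrp1 : (1:ℝ) ≤ (k:ℝ) ^ ((l₀:ℝ)/l) := by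
    calc (1:ℝ) = 1 ^ ((l₀:ℝ)/l) := (Real.one_rpow _).symm
      _ ≤ (k:ℝ) ^ ((l₀:ℝ)/l) := Real.rpow_le_rpow zero_le_one hkR (by positivity)
  have hrp2 : (1:ℝ) ≤ (k:ℝ) ^ (1/(l:ℝ)) := by
    calc (1:ℝ) = 1 ^ (1/(l:ℝ)) := (Real.one_rpow _).symm
      _ ≤ (k:ℝ) ^ (1/(l:ℝ)) := Real.rpow_le_rpow zero_le_one hkR (by positivity)
  have hk₁1 : 1 ≤ k₁ := Nat.le_floor (by exact_mod_cast hrp1)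
  have hk₂1 : 1 ≤ k₂ := Nat.le_floor (by exact_mod_cast hrp2)
  refine le_of_forall_pos_le_add fun ε hε => ?_
  obtain ⟨β, hβ, hβcard, hβint⟩ := quantErrMeas_exists_approx (μ := stdGaussian l₀) hk₁1
    (δ := ε / (2 * ((n:ℝ) + 1))) (by positivity)
  obtain ⟨γ, hγ, hγcard, hγint⟩ := quantErrMeas_exists_approx (μ := stdGaussian 1) hk₂1
    (δ := ε / (2 * ((m:ℝ) + 1))) (by positivity)
  obtain ⟨α, hα, hαcard, hαint⟩ := core_construction l₀ n m l hdecomp β hβ γ hγ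
  have hcard2 : α.card ≤ k := by
    have h1 : α.card ≤ k₁ ^ n * k₂ ^ m := le_trans hαcard
      (Nat.mul_le_mul (Nat.pow_le_pow_left hβcard n) (Nat.pow_le_pow_left hγcard m))
    refine le_trans h1 ?_
    have hfl₁ : (k₁:ℝ) ≤ (k:ℝ) ^ ((l₀:ℝ)/l) := Nat.floor_le (by positivity)
    have hfl₂ : (k₂:ℝ) ≤ (k:ℝ) ^ (1/(l:ℝ)) := Nat.floor_le (by positivity)
    have hmain : ((k₁ ^ n * k₂ ^ m : ℕ) : ℝ) ≤ (k:ℝ) := by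
      push_cast
      calc (k₁:ℝ)^n * (k₂:ℝ)^m
          ≤ ((k:ℝ) ^ ((l₀:ℝ)/l))^n * ((k:ℝ) ^ (1/(l:ℝ)))^m :=
            mul_le_mul (pow_le_pow_left₀ (Nat.cast_nonneg k₁) hfl₁ n)
              (pow_le_pow_left₀ (Nat.cast_nonneg k₂) hfl₂ m)
              (by positivity) (by positivity)
        _ = (k:ℝ) ^ (((l₀:ℝ)/l) * n + (1/(l:ℝ)) * m) := by
            rw [← Real.rpow_natCast ((k:ℝ) ^ ((l₀:ℝ)/l)) n,
              ← Real.rpow_natCast ((k:ℝ) ^ (1/(l:ℝ))) m,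
              ← Real.rpow_mul (le_of_lt hkpos), ← Real.rpow_mul (le_of_lt hkpos),
              ← Real.rpow_add hkpos]
        _ = (k:ℝ) ^ (1:ℝ) := by
            congr 1
            have hl0 : (l:ℝ) ≠ 0 := ne_of_gt hlR
            field_simp
            rw [hdecomp]
            push_cast
            ring
        _ = (k:ℝ) := Real.rpow_one _
    exact_mod_cast hmain
  have hA := quantErrMeas_sq_le (μ := stdGaussian l) hα hcard2
  have hB : (n:ℝ) * ∫ y, qf β y ∂(stdGaussian l₀)
      ≤ n * (quantErrMeas (stdGaussian l₀) k₁ ^ 2 + ε / (2 * ((n:ℝ) + 1))) :=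
    mul_le_mul_of_nonneg_left hβint (Nat.cast_nonneg n)
  have hC : (m:ℝ) * ∫ z, qf γ z ∂(stdGaussian 1)
      ≤ m * (quantErrMeas (stdGaussian 1) k₂ ^ 2 + ε / (2 * ((m:ℝ) + 1))) :=
    mul_le_mul_of_nonneg_left hγint (Nat.cast_nonneg m)
  have hfrac1 : (n:ℝ) * (ε / (2 * ((n:ℝ) + 1))) ≤ ε / 2 := by
    have hfrac : (n:ℝ) / (2 * ((n:ℝ) + 1)) ≤ 1 / 2 := by
      rw [div_le_div_iff₀ (by positivity) (by norm_num)]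
      nlinarith [Nat.cast_nonneg (α := ℝ) n]
    calc (n:ℝ) * (ε / (2 * ((n:ℝ) + 1))) = ((n:ℝ) / (2 * ((n:ℝ) + 1))) * ε := by ring
      _ ≤ (1 / 2) * ε := mul_le_mul_of_nonneg_right hfrac hε.le
      _ = ε / 2 := by ring
  have hfrac2 : (m:ℝ) * (ε / (2 * ((m:ℝ) + 1))) ≤ ε / 2 := by
    have hfrac : (m:ℝ) / (2 * ((m:ℝ) + 1)) ≤ 1 / 2 := by
      rw [div_le_div_iff₀ (by positivity) (by norm_num)]
      nlinarith [Nat.cast_nonneg (α := ℝ) m]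
    calc (m:ℝ) * (ε / (2 * ((m:ℝ) + 1))) = ((m:ℝ) / (2 * ((m:ℝ) + 1))) * ε := by ring
      _ ≤ (1 / 2) * ε := mul_le_mul_of_nonneg_right hfrac hε.le
      _ = ε / 2 := by ring
  calc (quantErrMeas (stdGaussian l) k) ^ 2
      ≤ ∫ x, qf α x ∂(stdGaussian l) := hA
    _ ≤ n * ∫ y, qf β y ∂(stdGaussian l₀) + m * ∫ z, qf γ z ∂(stdGaussian 1) := hαint
    _ ≤ n * (quantErrMeas (stdGaussian l₀) k₁ ^ 2 + ε / (2 * ((n:ℝ) + 1)))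
        + m * (quantErrMeas (stdGaussian 1) k₂ ^ 2 + ε / (2 * ((m:ℝ) + 1))) :=
        add_le_add hB hC
    _ ≤ n * quantErrMeas (stdGaussian l₀) k₁ ^ 2
        + m * quantErrMeas (stdGaussian 1) k₂ ^ 2 + ε := by
        have h1 : (n:ℝ) * (quantErrMeas (stdGaussian l₀) k₁ ^ 2 + ε / (2 * ((n:ℝ) + 1)))
            = n * quantErrMeas (stdGaussian l₀) k₁ ^ 2 + n * (ε / (2 * ((n:ℝ) + 1))) := by ring
        have h2 : (m:ℝ) * (quantErrMeas (stdGaussian 1) k₂ ^ 2 + ε / (2 * ((m:ℝ) + 1)))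
            = m * quantErrMeas (stdGaussian 1) k₂ ^ 2 + m * (ε / (2 * ((m:ℝ) + 1))) := by ring
        rw [h1, h2]
        linarith
end
end

section
/- Let (λ_j)_{j≥1} be a nonincreasing sequence of positive reals, n, m, l ∈ ℕ, and set n_j := [n^{1/m} λ_{(j−1)l+1}^{l/2} (Π_{i=1}^m λ_{(i−1)l+1})^{−l/2m}] for j ∈ {1,…,m}, where [x] is the integer part. Assume n_j ≥ 1 for all j (which holds when m = m(n,l) := max{k ≥ 1 : n^{1/k} λ_{(k−1)l+1}^{l/2}(Π_{j=1}^k λ_{(j−1)l+1})^{−l/2k} ≥ 1}). Then Σ_{j=1}^m λ_{(j−1)l+1} n_j^{−2/l} ≤ 4^{1/l} m λ_{(m−1)l+1}. -/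
open Real Filter

noncomputable section

/-- For a nonincreasing positive sequence `λ` (0-based; `λ_{jl}` is the leading eigenvalue of
block `j`) and the allocation
`n_j = ⌊n^{1/m} λ_{jl}^{l/2} (∏_{i<m} λ_{il})^{-l/(2m)}⌋`, with all `n_j ≥ 1`, one has
`∑_{j<m} λ_{jl} n_j^{-2/l} ≤ 4^{1/l} m λ_{(m-1)l}`. -/
theorem allocation_estimate
    (lam : ℕ → ℝ) (hpos : ∀ j, 0 < lam j) (hanti : Antitone lam)
    (n m l : ℕ) (hn : 1 ≤ n) (hm : 1 ≤ m) (hl : 1 ≤ l)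
    (nj : ℕ → ℕ)
    (hnj : ∀ j : ℕ, nj j =
      ⌊(n : ℝ) ^ (1 / (m : ℝ)) * (lam (j * l)) ^ ((l : ℝ) / 2)
        * (∏ i ∈ Finset.range m, lam (i * l)) ^ (-(l : ℝ) / (2 * (m : ℝ)))⌋₊)
    (hnj1 : ∀ j < m, 1 ≤ nj j) :
    ∑ j ∈ Finset.range m, lam (j * l) * ((nj j : ℝ)) ^ (-(2 : ℝ) / l)
      ≤ 4 ^ (1 / (l : ℝ)) * m * lam ((m - 1) * l) := by
  have hl0 : (0:ℝ) < l := by exact_mod_cast hl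
  have hm0 : (0:ℝ) < m := by exact_mod_cast hm
  have hn0 : (0:ℝ) < n := by exact_mod_cast hn
  have hexp : (-(2:ℝ)/l) ≤ 0 := by
    rw [neg_div]
    exact neg_nonpos.mpr (by positivity)
  set G : ℝ := ∏ i ∈ Finset.range m, lam (i * l) with hG
  have hGpos : 0 < G := Finset.prod_pos (fun i _ => hpos _)
  set x : ℕ → ℝ := fun j => (n : ℝ) ^ (1 / (m : ℝ)) * (lam (j * l)) ^ ((l : ℝ) / 2)
        * G ^ (-(l : ℝ) / (2 * (m : ℝ))) with hx
  have hxpos : ∀ j, 0 < x j := fun j =>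
    mul_pos (mul_pos (Real.rpow_pos_of_pos hn0 _) (Real.rpow_pos_of_pos (hpos _) _))
      (Real.rpow_pos_of_pos hGpos _)
  set c : ℝ := (n:ℝ) ^ ((1/(m:ℝ))*(-2/l)) * G ^ ((-(l:ℝ)/(2*m))*(-2/l)) with hc
  -- key identity
  have key : ∀ j : ℕ, lam (j*l) * (x j) ^ (-(2:ℝ)/l) = c := by
    intro j
    have hlj := hpos (j*l)
    have e2 : ((l:ℝ)/2)*(-2/l) = -1 := by field_simp
    rw [hx]
    rw [Real.mul_rpow (by positivity) (by positivity),
        Real.mul_rpow (by positivity) (by positivity),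
        ← Real.rpow_mul hn0.le, ← Real.rpow_mul hlj.le, ← Real.rpow_mul hGpos.le,
        e2, Real.rpow_neg_one, hc]
    field_simp
  -- x j ≥ 1 for j < m
  have hx1 : ∀ j < m, (1:ℝ) ≤ x j := by
    intro j hj
    have h := hnj1 j hj
    rw [hnj j] at h
    exact (Nat.one_le_floor_iff _).mp h
  -- c ≤ lam ((m-1) * l)
  have hcle : c ≤ lam ((m-1)*l) := by
    calc c = lam ((m-1)*l) * (x (m-1)) ^ (-(2:ℝ)/l) := (key (m-1)).symm
    _ ≤ lam ((m-1)*l) * 1 := by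
        refine mul_le_mul_of_nonneg_left ?_ (hpos _).le
        exact Real.rpow_le_one_of_one_le_of_nonpos (hx1 (m-1) (Nat.sub_lt hm Nat.one_pos)) hexp
    _ = lam ((m-1)*l) := mul_one _
  -- nj j ≥ x j / 2 for j < m
  have hnjx : ∀ j < m, x j / 2 ≤ (nj j : ℝ) := by
    intro j hj
    by_cases h2 : x j ≤ 2
    · have : x j / 2 ≤ 1 := by linarith
      exact this.trans (by exact_mod_cast hnj1 j hj)
    · push_neg at h2
      have h3 : x j - 1 < ⌊x j⌋₊ := Nat.sub_one_lt_floor _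
      rw [hnj j]
      have : x j / 2 ≤ x j - 1 := by linarith
      exact this.trans h3.le
  -- termwise bound
  have hterm : ∀ j < m, lam (j*l) * ((nj j : ℝ)) ^ (-(2:ℝ)/l)
      ≤ 4 ^ (1/(l:ℝ)) * lam ((m-1)*l) := by
    intro j hj
    have h1 : ((nj j : ℝ)) ^ (-(2:ℝ)/l) ≤ (x j / 2) ^ (-(2:ℝ)/l) :=
      Real.rpow_le_rpow_of_nonpos (div_pos (hxpos j) two_pos) (hnjx j hj) hexp
    have h2 : (x j / 2) ^ (-(2:ℝ)/l) = 4 ^ (1/(l:ℝ)) * (x j) ^ (-(2:ℝ)/l) := by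
      rw [Real.div_rpow (hxpos j).le (by norm_num), div_eq_mul_inv, mul_comm]
      congr 1
      rw [← Real.rpow_neg (by norm_num)]
      rw [show -(-2 / (l:ℝ)) = 2 * (1/(l:ℝ)) by ring,
          show (4:ℝ) = (2:ℝ)^(2:ℝ) by
            rw [show ((2:ℝ):ℝ) = ((2:ℕ):ℝ) from by norm_num, Real.rpow_natCast]; norm_num,
          ← Real.rpow_mul (by norm_num)]
    calc lam (j*l) * ((nj j : ℝ)) ^ (-(2:ℝ)/l)
        ≤ lam (j*l) * ((x j / 2) ^ (-(2:ℝ)/l)) :=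
          mul_le_mul_of_nonneg_left h1 (hpos _).le
    _ = 4 ^ (1/(l:ℝ)) * (lam (j*l) * (x j) ^ (-(2:ℝ)/l)) := by rw [h2]; ring
    _ = 4 ^ (1/(l:ℝ)) * c := by rw [key j]
    _ ≤ 4 ^ (1/(l:ℝ)) * lam ((m-1)*l) :=
        mul_le_mul_of_nonneg_left hcle (by positivity)
  calc ∑ j ∈ Finset.range m, lam (j * l) * ((nj j : ℝ)) ^ (-(2:ℝ)/l)
      ≤ ∑ j ∈ Finset.range m, 4 ^ (1/(l:ℝ)) * lam ((m-1)*l) :=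
        Finset.sum_le_sum (fun j hj => hterm j (Finset.mem_range.mp hj))
  _ = 4 ^ (1/(l:ℝ)) * m * lam ((m-1)*l) := by
      rw [Finset.sum_const, Finset.card_range, nsmul_eq_mul]; ring
end
end
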